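/- The star-controlled GCID system with two components, alphabet V = T = {a, b}, axiom ab in component C1, initial and final component C1, and the two insertion rules r1: (1, (a, a, λ)_I, 2) and r2: (2, (b, b, λ)_I, 1) generates exactly the language { aⁿbⁿ : n ≥ 1 }. -/
import Mathlib


/-!
Graph-controlled insertion-deletion (GCID) systems.

Symbols are drawn from the universal symbol set `ℕ`, strings are lists of
symbols.  A GCID system `Π = (k, V, T, A, H, i0, F, R)` has `k` components;
rules `(i, r, j)` move a string from component `i` to component `j`, where
`r` is an insertion rule `(u, η, v)_I` (rewriting `uv → uηv`) or a deletion
rule `(u, δ, v)_D` (rewriting `uδv → uv`), with `u, v ∈ V*` and `η, δ ∈ V⁺`.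
-/

namespace GCIDPaper

/-- Strings over the universal symbol set `ℕ`. -/
abbrev Word : Type := List ℕ

/-- An insertion rule `(u, s, v)_I` (when `isInsertion = true`) or a deletion
rule `(u, s, v)_D` (when `isInsertion = false`), with left context `lctx = u`,
inserted resp. deleted string `core = s`, and right context `rctx = v`. -/
structure InsDelRule : Type where
  isInsertion : Bool
  lctx : Word
  core : Word
  rctx : Word
  deriving DecidableEq

/-- The insertion rule `(u, η, v)_I`. -/
def insRule (u η v : Word) : InsDelRule := ⟨true, u, η, v⟩

/-- The deletion rule `(u, δ, v)_D`. -/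
def delRule (u δ v : Word) : InsDelRule := ⟨false, u, δ, v⟩

/-- Applying a rule to a string: the insertion rule `(u, η, v)_I` corresponds
to the rewriting `uv → uηv`, the deletion rule `(u, δ, v)_D` to `uδv → uv`. -/
def InsDelRule.Applies (r : InsDelRule) (w w' : Word) : Prop :=
  (r.isInsertion = true →
    ∃ x y, w = x ++ r.lctx ++ r.rctx ++ y ∧
      w' = x ++ r.lctx ++ r.core ++ r.rctx ++ y) ∧
  (r.isInsertion = false →
    ∃ x y, w = x ++ r.lctx ++ r.core ++ r.rctx ++ y ∧
      w' = x ++ r.lctx ++ r.rctx ++ y)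

/-- A graph-controlled insertion-deletion system.  The components are
numbered `1, …, k`; `i0` is the initial component, `F` the set of final
components, `axioms` the finite set of axioms (placed in component `i0`),
and `R` the finite set of rules `(i, r, j)`. -/
structure System : Type where
  k : ℕ
  V : Finset ℕ
  T : Finset ℕ
  axioms : Finset Word
  i0 : ℕ
  F : Finset ℕ
  R : Finset (ℕ × InsDelRule × ℕ)
  k_pos : 1 ≤ k
  T_sub_V : T ⊆ V
  axioms_over_V : ∀ w ∈ axioms, ∀ a ∈ w, a ∈ V
  i0_mem : i0 ∈ Finset.Icc 1 k
  F_sub : F ⊆ Finset.Icc 1 k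
  R_wf : ∀ q ∈ R, q.1 ∈ Finset.Icc 1 k ∧ q.2.2 ∈ Finset.Icc 1 k ∧
    q.2.1.core ≠ [] ∧ (∀ a ∈ q.2.1.lctx, a ∈ V) ∧
    (∀ a ∈ q.2.1.core, a ∈ V) ∧ (∀ a ∈ q.2.1.rctx, a ∈ V)

/-- One derivation step between configurations: `(w)_i ⇒ (w')_j` if some rule
`(i, r, j)` of the system applied to `w` yields `w'`. -/
def Step (S : System) (c c' : Word × ℕ) : Prop :=
  ∃ q ∈ S.R, q.1 = c.2 ∧ q.2.2 = c'.2 ∧ q.2.1.Applies c.1 c'.1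

/-- The reflexive-transitive closure `⇒*` of the step relation. -/
def Derives (S : System) : Word × ℕ → Word × ℕ → Prop :=
  Relation.ReflTransGen (Step S)

/-- The language generated:
`L(Π) = { w ∈ T* : (x)_{i0} ⇒* (w)_{i_f} for some axiom x and some i_f ∈ F }`. -/
def language (S : System) : Set Word :=
  { w | (∀ a ∈ w, a ∈ S.T) ∧
    ∃ x ∈ S.axioms, ∃ f ∈ S.F, Derives S (x, S.i0) (w, f) }

/-- A single rule obeys the size bounds `(n, i', i''; m, j', j'')`. -/
def InsDelRule.SizeLE (r : InsDelRule) (n i' i'' m j' j'' : ℕ) : Prop :=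
  (r.isInsertion = true →
    r.core.length ≤ n ∧ r.lctx.length ≤ i' ∧ r.rctx.length ≤ i'') ∧
  (r.isInsertion = false →
    r.core.length ≤ m ∧ r.lctx.length ≤ j' ∧ r.rctx.length ≤ j'')

/-- The system has size `(k; n, i', i''; m, j', j'')`. -/
def HasSize (S : System) (k n i' i'' m j' j'' : ℕ) : Prop :=
  S.k = k ∧ ∀ q ∈ S.R, q.2.1.SizeLE n i' i'' m j' j''

/-- Star-controlled: the underlying undirected control graph (with an edge
`{Ci, Cj}` whenever there is a rule `(i, r, j)`) has exactly the edge set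
`{ {C1, Ci} : 2 ≤ i ≤ k }`; in particular there are no loops. -/
def StarControlled (S : System) : Prop :=
  (∀ q ∈ S.R, ∃ i ∈ Finset.Icc 2 S.k, ({q.1, q.2.2} : Finset ℕ) = {1, i}) ∧
  (∀ i ∈ Finset.Icc 2 S.k, ∃ q ∈ S.R, ({q.1, q.2.2} : Finset ℕ) = {1, i})

/-- The class `GCID(k; n, i', i''; m, j', j'')` of languages generated by GCID
systems of the given size. -/
def GCIDClass (k n i' i'' m j' j'' : ℕ) : Set (Set Word) :=
  { L | ∃ S : System, HasSize S k n i' i'' m j' j'' ∧ language S = L }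

/-- The class `GCID_S(k; n, i', i''; m, j', j'')` of languages generated by
star-controlled GCID systems of the given size. -/
def GCID_S (k n i' i'' m j' j'' : ℕ) : Set (Set Word) :=
  { L | ∃ S : System, StarControlled S ∧ HasSize S k n i' i'' m j' j'' ∧
    language S = L }

/-- The star-controlled GCID system with two components, alphabet
`V = T = {a, b}` (encoded as `a = 0`, `b = 1`), axiom `ab` in component `C1`,
initial and final component `C1`, and the two insertion rules
`r1 : (1, (a, a, λ)_I, 2)` and `r2 : (2, (b, b, λ)_I, 1)`. -/
def anbnPosSystem : System where
  k := 2
  V := {0, 1}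
  T := {0, 1}
  axioms := {[0, 1]}
  i0 := 1
  F := {1}
  R := {(1, insRule [0] [0] [], 2), (2, insRule [1] [1] [], 1)}
  k_pos := by decide
  T_sub_V := by decide
  axioms_over_V := by decide
  i0_mem := by decide
  F_sub := by decide
  R_wf := by decide

lemma insert_first {a b : ℕ} (hab : a ≠ b) {x y : Word} {m n : ℕ}
    (h : x ++ a :: y = List.replicate m a ++ List.replicate n b) :
    x ++ a :: a :: y = List.replicate (m + 1) a ++ List.replicate n b := by
  have hlen : x.length ≤ m := by
    by_contra hge
    push_neg at hge
    have hmem : a ∈ List.drop x.length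
        (List.replicate m a ++ List.replicate n b) := by
      rw [← h, List.drop_append]
      simp
    rw [List.drop_append,
      List.drop_eq_nil_of_le (by simp; omega)] at hmem
    simp only [List.nil_append] at hmem
    exact hab (List.eq_of_mem_replicate (List.mem_of_mem_drop hmem))
  have hx : x = List.replicate x.length a := by
    have htake : x = (List.replicate m a ++ List.replicate n b).take x.length := by
      rw [← h]; simp
    rw [htake, List.take_append_of_le_length (by simpa using hlen),
      List.take_replicate, Nat.min_eq_left hlen]
    simp
  calc x ++ a :: a :: y
      = (x ++ [a]) ++ a :: y := by simp
    _ = a :: (x ++ a :: y) := by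
        rw [hx, ← List.replicate_succ', List.replicate_succ]
        simp
    _ = a :: (List.replicate m a ++ List.replicate n b) := by rw [h]
    _ = List.replicate (m + 1) a ++ List.replicate n b := by
        simp [List.replicate_succ]


lemma insert_second {a b : ℕ} (hab : a ≠ b) {x y : Word} {m n : ℕ}
    (h : x ++ b :: y = List.replicate m a ++ List.replicate n b) :
    x ++ b :: b :: y = List.replicate m a ++ List.replicate (n + 1) b := by
  have h' : y.reverse ++ b :: x.reverse =
      List.replicate n b ++ List.replicate m a := by
    have := congrArg List.reverse h
    simpa using this
  have h2 := insert_first (Ne.symm hab) h'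
  have h3 := congrArg List.reverse h2
  simpa using h3

/-- Invariant of the derivation relation of `anbnPosSystem`. -/
def anbnInv (c : Word × ℕ) : Prop :=
  (c.2 = 1 ∧ ∃ n : ℕ, 1 ≤ n ∧
    c.1 = List.replicate n 0 ++ List.replicate n 1) ∨
  (c.2 = 2 ∧ ∃ n : ℕ, 1 ≤ n ∧
    c.1 = List.replicate (n + 1) 0 ++ List.replicate n 1)

lemma anbnInv_step {c c' : Word × ℕ} (hs : Step anbnPosSystem c c')
    (hc : anbnInv c) : anbnInv c' := by
  obtain ⟨q, hqR, hq1, hq2, happ⟩ := hs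
  have hqR' : q = (1, insRule [0] [0] [], 2) ∨ q = (2, insRule [1] [1] [], 1) := by
    simpa [anbnPosSystem] using hqR
  rcases hqR' with rfl | rfl
  · obtain ⟨x, y, hw, hw'⟩ := happ.1 rfl
    rcases hc with ⟨h1, n, hn, hcw⟩ | ⟨h2, _⟩
    · right
      refine ⟨hq2.symm, n, hn, ?_⟩
      have h : x ++ (0 : ℕ) :: y = List.replicate n 0 ++ List.replicate n 1 := by
        rw [← hcw]; simpa [insRule] using hw.symm
      have := insert_first (a := 0) (b := 1) (by decide) h
      rw [← this]; simpa [insRule] using hw'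
    · exfalso; have := hq1.trans h2; simp at this
  · obtain ⟨x, y, hw, hw'⟩ := happ.1 rfl
    rcases hc with ⟨h1, _⟩ | ⟨h2, n, hn, hcw⟩
    · exfalso; have := hq1.trans h1; simp at this
    · left
      refine ⟨hq2.symm, n + 1, by omega, ?_⟩
      have h : x ++ (1 : ℕ) :: y =
          List.replicate (n + 1) 0 ++ List.replicate n 1 := by
        rw [← hcw]; simpa [insRule] using hw.symm
      have := insert_second (a := 0) (b := 1) (by decide) h
      rw [← this]; simpa [insRule] using hw'

lemma anbnInv_derives {c c' : Word × ℕ} (hd : Derives anbnPosSystem c c')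
    (hc : anbnInv c) : anbnInv c' := by
  induction hd with
  | refl => exact hc
  | tail _ hstep ih => exact anbnInv_step hstep ih

lemma anbn_reach (n : ℕ) (hn : 1 ≤ n) :
    Derives anbnPosSystem ([0, 1], 1)
      (List.replicate n 0 ++ List.replicate n 1, 1) := by
  induction n with
  | zero => omega
  | succ p ih =>
    rcases Nat.eq_zero_or_pos p with h0 | hp
    · subst h0
      have : List.replicate 1 (0 : ℕ) ++ List.replicate 1 1 = [0, 1] := rfl
      rw [this]
      exact Relation.ReflTransGen.refl
    · obtain ⟨q, rfl⟩ : ∃ q, p = q + 1 := ⟨p - 1, by omega⟩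
      have step1 : Step anbnPosSystem
          (List.replicate (q + 1) 0 ++ List.replicate (q + 1) 1, 1)
          (List.replicate (q + 2) 0 ++ List.replicate (q + 1) 1, 2) := by
        refine ⟨(1, insRule [0] [0] [], 2), by simp [anbnPosSystem], rfl, rfl,
          ?_, by simp [insRule]⟩
        intro _
        exact ⟨[], List.replicate q 0 ++ List.replicate (q + 1) 1,
          by simp [insRule, List.replicate_succ],
          by simp [insRule, List.replicate_succ]⟩
      have step2 : Step anbnPosSystem
          (List.replicate (q + 2) 0 ++ List.replicate (q + 1) 1, 2)
          (List.replicate (q + 2) 0 ++ List.replicate (q + 2) 1, 1) := by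
        refine ⟨(2, insRule [1] [1] [], 1), by simp [anbnPosSystem], rfl, rfl,
          ?_, by simp [insRule]⟩
        intro _
        exact ⟨List.replicate (q + 2) 0, List.replicate q 1,
          by simp [insRule, List.replicate_succ],
          by simp [insRule, List.replicate_succ]⟩
      exact ((ih (by omega)).tail step1).tail step2

/-- The system `anbnPosSystem` is star-controlled and generates exactly the
language `{ aⁿbⁿ : n ≥ 1 }`. -/
theorem anbnPosSystem_generates :
    StarControlled anbnPosSystem ∧
      language anbnPosSystem =
        { w : Word | ∃ n : ℕ, 1 ≤ n ∧
          w = List.replicate n 0 ++ List.replicate n 1 } := by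
  constructor
  · constructor
    · intro q hq
      have hq' : q = (1, insRule [0] [0] [], 2) ∨
          q = (2, insRule [1] [1] [], 1) := by
        simpa [anbnPosSystem] using hq
      rcases hq' with rfl | rfl
      · exact ⟨2, by decide, by decide⟩
      · exact ⟨2, by decide, by decide⟩
    · intro i hi
      have : i = 2 := by
        simp [anbnPosSystem, Finset.mem_Icc] at hi; omega
      subst this
      exact ⟨(1, insRule [0] [0] [], 2), by simp [anbnPosSystem], by decide⟩
  · ext w
    simp only [language, Set.mem_setOf_eq]
    constructor
    · rintro ⟨-, x, hx, f, hf, hd⟩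
      have hx' : x = [0, 1] := by simpa [anbnPosSystem] using hx
      have hf' : f = 1 := by simpa [anbnPosSystem] using hf
      subst hx'; subst hf'
      have hinv : anbnInv (w, 1) := by
        apply anbnInv_derives hd
        exact Or.inl ⟨rfl, 1, le_refl 1, by decide⟩
      rcases hinv with ⟨-, n, hn, hw⟩ | ⟨h2, -⟩
      · exact ⟨n, hn, hw⟩
      · simp at h2
    · rintro ⟨n, hn, rfl⟩
      refine ⟨?_, [0, 1], by simp [anbnPosSystem], 1, by simp [anbnPosSystem],
        anbn_reach n hn⟩
      intro a ha
      simp only [List.mem_append, List.mem_replicate] at ha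
      rcases ha with ⟨-, rfl⟩ | ⟨-, rfl⟩ <;> simp [anbnPosSystem]

end GCIDPaper
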